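/- (Lemma 3.) Under the setting of the ARQ-Learning error decomposition, assume additionally that α ∈ [0,1] and that for every s ∈ S some maximizer of V⋆ over N_s belongs to N̂_s (Assumption 2). Then for every t ≥ 1 and every (s,a) ∈ S × A, |β_{3,t}(s,a)| ≤ γ ∑_{i=1}^{t} ‖ψ_{i−1}‖∞ · α χ_i(s,a) · ∏_{j=i+1}^{t} (1 − α χ_j(s,a)), where ψ_{i−1} = Q_{i−1} − Q⋆ and ‖·‖∞ is the maximum of the absolute value over S × A. -/

import Mathlib

open Finset

/-- Value function `V_Q(s) = min_{a ∈ A} Q(s,a)`. -/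
noncomputable def Vq {S A : Type*} [Fintype A] [Nonempty A] (Q : S → A → ℝ) (s : S) : ℝ :=
  Finset.univ.inf' Finset.univ_nonempty (fun a => Q s a)

open Classical in
/-- Neighboring set `N_s = {s' : ∑_a p̄(s,a)(s') ≠ 0}`. -/
noncomputable def nbr {S A : Type*} [Fintype S] [Fintype A] (pbar : S → A → S → ℝ) (s : S) :
    Finset S :=
  Finset.univ.filter (fun s' => (∑ a, pbar s a s') ≠ 0)

/-- ℓ∞-norm `‖Q‖∞ = max_{(s,a)} |Q(s,a)|`. -/
noncomputable def supNorm {S A : Type*} [Fintype S] [Fintype A] [Nonempty S] [Nonempty A]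
    (Q : S → A → ℝ) : ℝ :=
  Finset.univ.sup' Finset.univ_nonempty (fun p : S × A => |Q p.1 p.2|)

/-- Adjacent robust Bellman operator. -/
noncomputable def Tadj {S A : Type*} [Fintype S] [Fintype A] [Nonempty A]
    (c : S → A → ℝ) (γ R : ℝ) (pbar : S → A → S → ℝ)
    (hNne : ∀ s, (nbr pbar s).Nonempty) (Q : S → A → ℝ) (s : S) (a : A) : ℝ :=
  c s a + γ * (1 - R) * (∑ s', pbar s a s' * Vq Q s')
    + γ * R * (nbr pbar s).sup' (hNne s) (Vq Q)


section auxlemmas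
variable {S A : Type*} [Fintype S] [Fintype A] [Nonempty S] [Nonempty A]

lemma abs_le_supNorm'' (Q : S → A → ℝ) (s : S) (a : A) : |Q s a| ≤ supNorm Q :=
  Finset.le_sup' (fun p : S × A => |Q p.1 p.2|) (Finset.mem_univ (s, a))

lemma Vq_sub_le' (Q Q' : S → A → ℝ) (s : S) :
    Vq Q s - Vq Q' s ≤ supNorm (fun s' a' => Q s' a' - Q' s' a') := by
  obtain ⟨a, -, ha⟩ := Finset.exists_mem_eq_inf' (Finset.univ_nonempty (α := A)) (fun a => Q' s a)
  have h1 : Vq Q s ≤ Q s a := Finset.inf'_le _ (Finset.mem_univ a)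
  have h3 : Q s a - Q' s a ≤ supNorm (fun s' a' => Q s' a' - Q' s' a') :=
    (le_abs_self _).trans (abs_le_supNorm'' (fun s' a' => Q s' a' - Q' s' a') s a)
  have h2 : Vq Q' s = Q' s a := ha
  linarith

lemma abs_Vq_sub' (Q Q' : S → A → ℝ) (s : S) :
    |Vq Q s - Vq Q' s| ≤ supNorm (fun s' a' => Q s' a' - Q' s' a') := by
  rw [abs_sub_le_iff]
  refine ⟨Vq_sub_le' Q Q' s, ?_⟩
  have h := Vq_sub_le' Q' Q s
  have heq : supNorm (fun s' a' => Q' s' a' - Q s' a')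
      = supNorm (fun s' a' => Q s' a' - Q' s' a') := by
    simp [supNorm, abs_sub_comm]
  linarith

end auxlemmas

lemma weighted_abs_sum_le' (T : Finset ℕ) (w f g : ℕ → ℝ)
    (hw : ∀ i ∈ T, 0 ≤ w i) (h : ∀ i ∈ T, |f i| ≤ g i) :
    |∑ i ∈ T, w i * f i| ≤ ∑ i ∈ T, w i * g i := by
  calc |∑ i ∈ T, w i * f i| ≤ ∑ i ∈ T, |w i * f i| := Finset.abs_sum_le_sum_abs _ _
    _ ≤ ∑ i ∈ T, w i * g i := by
        apply Finset.sum_le_sum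
        intro i hi
        rw [abs_mul, abs_of_nonneg (hw i hi)]
        exact mul_le_mul_of_nonneg_left (h i hi) (hw i hi)

/-- Lemma 3: bound on `β_{3,t}` in the ARQ-Learning error decomposition. -/
theorem arq_beta3_bound
    {S A : Type*} [Fintype S] [Fintype A] [Nonempty S] [Nonempty A]
    (c : S → A → ℝ) (γ R α : ℝ) (hγ0 : 0 < γ) (hγ1 : γ < 1) (hR0 : 0 ≤ R) (hR1 : R ≤ 1)
    (hα0 : 0 ≤ α) (hα1 : α ≤ 1)
    (pbar : S → A → S → ℝ)
    (hp_nonneg : ∀ s a s', 0 ≤ pbar s a s')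
    (hp_sum : ∀ s a, ∑ s', pbar s a s' = 1)
    (hself : ∀ s : S, s ∈ nbr pbar s)
    (Nhat : S → Finset S) (hNhat_sub : ∀ s, Nhat s ⊆ nbr pbar s)
    (hNhat_ne : ∀ s, (Nhat s).Nonempty)
    (χ : ℕ → S → A → ℝ) (hχ : ∀ t s a, χ t s a = 0 ∨ χ t s a = 1)
    (P : ℕ → S → A → S → ℝ)
    (hP_nonneg : ∀ t s a s', 0 ≤ P t s a s')
    (hP_sum : ∀ t s a, ∑ s', P t s a s' = 1)
    (Q : ℕ → S → A → ℝ) (Qstar : S → A → ℝ)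
    (hrec : ∀ t : ℕ, 1 ≤ t → ∀ s a,
      Q t s a = (1 - α * χ t s a) * Q (t - 1) s a
        + α * χ t s a * (c s a
            + γ * (1 - R) * (∑ s', P t s a s' * Vq (Q (t - 1)) s')
            + γ * R * (Nhat s).sup' (hNhat_ne s) (Vq (Q (t - 1)))))
    (hfix : ∀ s a,
      Qstar s a = c s a + γ * (1 - R) * (∑ s', pbar s a s' * Vq Qstar s')
        + γ * R * (nbr pbar s).sup' ⟨s, hself s⟩ (Vq Qstar))
    -- Assumption 2: a maximizer of `V⋆` over `N_s` belongs to `N̂_s`.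
    (hass2 : ∀ s : S, ∃ sstar ∈ Nhat s,
      Vq Qstar sstar = (nbr pbar s).sup' ⟨s, hself s⟩ (Vq Qstar)) :
    ∀ (t : ℕ), 1 ≤ t → ∀ (s : S) (a : A),
      |γ * (1 - R) * (∑ i ∈ Finset.Icc 1 t,
            α * χ i s a * (∏ j ∈ Finset.Icc (i + 1) t, (1 - α * χ j s a))
              * (∑ s', P i s a s' * (Vq (Q (i - 1)) s' - Vq Qstar s')))
        + γ * R * (∑ i ∈ Finset.Icc 1 t,
            α * χ i s a * (∏ j ∈ Finset.Icc (i + 1) t, (1 - α * χ j s a))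
              * ((Nhat s).sup' (hNhat_ne s) (Vq (Q (i - 1)))
                  - (nbr pbar s).sup' ⟨s, hself s⟩ (Vq Qstar)))|
      ≤ γ * ∑ i ∈ Finset.Icc 1 t,
          supNorm (fun s' a' => Q (i - 1) s' a' - Qstar s' a')
            * (α * χ i s a) * (∏ j ∈ Finset.Icc (i + 1) t, (1 - α * χ j s a)) := by

  intro t ht s a
  have hw_nonneg : ∀ i ∈ Finset.Icc 1 t,
      0 ≤ α * χ i s a * ∏ j ∈ Finset.Icc (i + 1) t, (1 - α * χ j s a) := by
    intro i _
    apply mul_nonneg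
    · rcases hχ i s a with h | h <;> simp [h, hα0]
    · apply Finset.prod_nonneg
      intro j _
      rcases hχ j s a with h | h <;> simp [h] <;> linarith
  have hV : ∀ (i : ℕ) (s' : S), |Vq (Q (i - 1)) s' - Vq Qstar s'|
      ≤ supNorm (fun s' a' => Q (i - 1) s' a' - Qstar s' a') :=
    fun i s' => abs_Vq_sub' _ _ s'
  have hterm1 : ∀ i ∈ Finset.Icc 1 t,
      |∑ s', P i s a s' * (Vq (Q (i - 1)) s' - Vq Qstar s')|
        ≤ supNorm (fun s' a' => Q (i - 1) s' a' - Qstar s' a') := by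
    intro i _
    calc |∑ s', P i s a s' * (Vq (Q (i - 1)) s' - Vq Qstar s')|
        ≤ ∑ s', |P i s a s' * (Vq (Q (i - 1)) s' - Vq Qstar s')| :=
          Finset.abs_sum_le_sum_abs _ _
      _ ≤ ∑ s', P i s a s' * supNorm (fun s' a' => Q (i - 1) s' a' - Qstar s' a') := by
          apply Finset.sum_le_sum
          intro s' _
          rw [abs_mul, abs_of_nonneg (hP_nonneg i s a s')]
          exact mul_le_mul_of_nonneg_left (hV i s') (hP_nonneg i s a s')
      _ = supNorm (fun s' a' => Q (i - 1) s' a' - Qstar s' a') := by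
          rw [← Finset.sum_mul, hP_sum, one_mul]
  have hterm2 : ∀ i ∈ Finset.Icc 1 t,
      |(Nhat s).sup' (hNhat_ne s) (Vq (Q (i - 1)))
          - (nbr pbar s).sup' ⟨s, hself s⟩ (Vq Qstar)|
        ≤ supNorm (fun s' a' => Q (i - 1) s' a' - Qstar s' a') := by
    intro i _
    obtain ⟨sstar, hsmem, hseq⟩ := hass2 s
    rw [abs_sub_le_iff]
    constructor
    · have h1 : (Nhat s).sup' (hNhat_ne s) (Vq (Q (i - 1)))
          ≤ (nbr pbar s).sup' ⟨s, hself s⟩ (Vq Qstar)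
            + supNorm (fun s' a' => Q (i - 1) s' a' - Qstar s' a') := by
        apply Finset.sup'_le
        intro b hb
        have hb' : Vq Qstar b ≤ (nbr pbar s).sup' ⟨s, hself s⟩ (Vq Qstar) :=
          Finset.le_sup' _ (hNhat_sub s hb)
        have habs := abs_le.mp (hV i b)
        linarith [habs.2]
      linarith
    · have h2 : Vq (Q (i - 1)) sstar ≤ (Nhat s).sup' (hNhat_ne s) (Vq (Q (i - 1))) :=
        Finset.le_sup' _ hsmem
      have habs := abs_le.mp (hV i sstar)
      rw [← hseq]
      linarith [habs.1]
  have h1 := weighted_abs_sum_le' (Finset.Icc 1 t)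
    (fun i => α * χ i s a * ∏ j ∈ Finset.Icc (i + 1) t, (1 - α * χ j s a))
    (fun i => ∑ s', P i s a s' * (Vq (Q (i - 1)) s' - Vq Qstar s'))
    (fun i => supNorm (fun s' a' => Q (i - 1) s' a' - Qstar s' a'))
    hw_nonneg hterm1
  have h2 := weighted_abs_sum_le' (Finset.Icc 1 t)
    (fun i => α * χ i s a * ∏ j ∈ Finset.Icc (i + 1) t, (1 - α * χ j s a))
    (fun i => (Nhat s).sup' (hNhat_ne s) (Vq (Q (i - 1)))
        - (nbr pbar s).sup' ⟨s, hself s⟩ (Vq Qstar))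
    (fun i => supNorm (fun s' a' => Q (i - 1) s' a' - Qstar s' a'))
    hw_nonneg hterm2
  have hRHS : ∑ i ∈ Finset.Icc 1 t,
      supNorm (fun s' a' => Q (i - 1) s' a' - Qstar s' a')
        * (α * χ i s a) * (∏ j ∈ Finset.Icc (i + 1) t, (1 - α * χ j s a))
      = ∑ i ∈ Finset.Icc 1 t,
        (α * χ i s a * ∏ j ∈ Finset.Icc (i + 1) t, (1 - α * χ j s a))
          * supNorm (fun s' a' => Q (i - 1) s' a' - Qstar s' a') :=
    Finset.sum_congr rfl (fun i _ => by ring)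
  have hc1 : 0 ≤ γ * (1 - R) := mul_nonneg hγ0.le (by linarith)
  have hc2 : 0 ≤ γ * R := mul_nonneg hγ0.le hR0
  calc |γ * (1 - R) * (∑ i ∈ Finset.Icc 1 t,
            α * χ i s a * (∏ j ∈ Finset.Icc (i + 1) t, (1 - α * χ j s a))
              * (∑ s', P i s a s' * (Vq (Q (i - 1)) s' - Vq Qstar s')))
        + γ * R * (∑ i ∈ Finset.Icc 1 t,
            α * χ i s a * (∏ j ∈ Finset.Icc (i + 1) t, (1 - α * χ j s a))
              * ((Nhat s).sup' (hNhat_ne s) (Vq (Q (i - 1)))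
                  - (nbr pbar s).sup' ⟨s, hself s⟩ (Vq Qstar)))|
      ≤ γ * (1 - R) * |∑ i ∈ Finset.Icc 1 t,
            α * χ i s a * (∏ j ∈ Finset.Icc (i + 1) t, (1 - α * χ j s a))
              * (∑ s', P i s a s' * (Vq (Q (i - 1)) s' - Vq Qstar s'))|
        + γ * R * |∑ i ∈ Finset.Icc 1 t,
            α * χ i s a * (∏ j ∈ Finset.Icc (i + 1) t, (1 - α * χ j s a))
              * ((Nhat s).sup' (hNhat_ne s) (Vq (Q (i - 1)))
                  - (nbr pbar s).sup' ⟨s, hself s⟩ (Vq Qstar))| := by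
        refine (abs_add_le _ _).trans ?_
        rw [abs_mul (γ * (1 - R)), abs_mul (γ * R), abs_of_nonneg hc1, abs_of_nonneg hc2]
    _ ≤ γ * (1 - R) * ∑ i ∈ Finset.Icc 1 t,
            (α * χ i s a * ∏ j ∈ Finset.Icc (i + 1) t, (1 - α * χ j s a))
              * supNorm (fun s' a' => Q (i - 1) s' a' - Qstar s' a')
        + γ * R * ∑ i ∈ Finset.Icc 1 t,
            (α * χ i s a * ∏ j ∈ Finset.Icc (i + 1) t, (1 - α * χ j s a))
              * supNorm (fun s' a' => Q (i - 1) s' a' - Qstar s' a') := by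
        gcongr
    _ = γ * ∑ i ∈ Finset.Icc 1 t,
          supNorm (fun s' a' => Q (i - 1) s' a' - Qstar s' a')
            * (α * χ i s a) * (∏ j ∈ Finset.Icc (i + 1) t, (1 - α * χ j s a)) := by
        rw [hRHS]; ring
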